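/- If a locally kω Hausdorff space X is metrizable, then X is locally compact. -/

import Mathlib

/-- `K` is a kω-sequence for the topological space `X`: an ascending sequence of
compact subsets covering `X` such that the topology of `X` is final with respect
to the inclusions `K n → X`. -/
def IsKOmegaSeq {X : Type*} [TopologicalSpace X] (K : ℕ → Set X) : Prop :=
  (∀ n, IsCompact (K n)) ∧ Monotone K ∧ (⋃ n, K n) = Set.univ ∧
    ∀ U : Set X, IsOpen U ↔ ∀ n, IsOpen ((Subtype.val ⁻¹' U) : Set (K n))

/-- A kω-space: a Hausdorff space which is the direct limit of an ascending
sequence of compact subsets. -/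
def IsKOmega (X : Type*) [TopologicalSpace X] : Prop :=
  T2Space X ∧ ∃ K : ℕ → Set X, IsKOmegaSeq K

/-- A locally kω space: a Hausdorff space each point of which has an open
neighbourhood which is a kω-space in the induced topology. -/
def IsLocallyKOmega (X : Type*) [TopologicalSpace X] : Prop :=
  T2Space X ∧ ∀ x : X, ∃ U : Set X, IsOpen U ∧ x ∈ U ∧ IsKOmega U

/-- In a first-countable T2 kω space every point has a compact neighbourhood. -/
theorem kOmega_compact_nhds {Y : Type*} [TopologicalSpace Y]
    [FirstCountableTopology Y] (hT2 : T2Space Y)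
    {K : ℕ → Set Y} (hK : IsKOmegaSeq K) (y : Y) :
    ∃ s : Set Y, IsCompact s ∧ s ∈ nhds y := by
  haveI := hT2
  obtain ⟨hKc, hKm, hKu, hKt⟩ := hK
  obtain ⟨V, hV⟩ := (nhds y).exists_antitone_basis
  by_cases h : ∃ m n, V m ⊆ K n ∪ {y}
  · obtain ⟨m, n, hmn⟩ := h
    exact ⟨K n ∪ {y}, (hKc n).union isCompact_singleton,
      Filter.mem_of_superset (hV.mem m) hmn⟩
  push_neg at h
  choose x hx using fun m => Set.not_subset.mp (h m m)
  have hxK : ∀ m, x m ∉ K m := fun m hm => (hx m).2 (Or.inl hm)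
  have hxy : ∀ m, x m ≠ y := fun m hm => (hx m).2 (Or.inr hm)
  set A := Set.range x with hA
  have hAK : ∀ n, (A ∩ K n) ⊆ x '' Set.Iio n := by
    rintro n a ⟨⟨m, rfl⟩, haK⟩
    refine ⟨m, ?_, rfl⟩
    by_contra hmn
    exact hxK m (hKm (le_of_not_gt hmn) haK)
  have hopen : IsOpen Aᶜ := by
    rw [hKt]
    intro n
    have heq : (Subtype.val ⁻¹' A : Set (K n)) = Subtype.val ⁻¹' (A ∩ K n) := by
      ext a
      simp [a.2]
    have hfin : (Subtype.val ⁻¹' A : Set (K n)).Finite := by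
      rw [heq]
      exact (((Set.finite_Iio n).image x).subset (hAK n)).preimage
        Subtype.val_injective.injOn
    rw [Set.preimage_compl]
    exact hfin.isClosed.isOpen_compl
  have hyA : y ∈ Aᶜ := by
    rintro ⟨m, hm⟩
    exact hxy m hm
  obtain ⟨m, -, hm⟩ := hV.1.mem_iff.mp (hopen.mem_nhds hyA)
  exact (hm (hx m).1 ⟨m, rfl⟩).elim

/-- A metrizable locally kω space is locally compact. -/
theorem locallyCompact_of_metrizable_locallyKOmega
    (X : Type*) [TopologicalSpace X] [TopologicalSpace.MetrizableSpace X]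
    (hX : IsLocallyKOmega X) : LocallyCompactSpace X := by
  haveI := hX.1
  haveI : WeaklyLocallyCompactSpace X := by
    constructor
    intro x
    obtain ⟨U, hUo, hxU, hT2U, K, hK⟩ := hX.2 x
    obtain ⟨s, hsc, hsn⟩ := kOmega_compact_nhds hT2U hK ⟨x, hxU⟩
    refine ⟨Subtype.val '' s, hsc.image continuous_subtype_val, ?_⟩
    rw [← hUo.isOpenEmbedding_subtypeVal.map_nhds_eq ⟨x, hxU⟩]
    exact Filter.image_mem_map hsn
  infer_instance
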